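/- arXiv:1512.08063 — 3 statements merged into one kernel-verified Lean document; each statement's English description precedes it below -/
import Mathlib

section
/- For every τ in the upper half-plane and all z, w ∈ ℂ, the level-three theta functions satisfy the three addition formulae: θ₀²·θ₀(z+w)·θ₀(z−w) = θ₁(z)θ₂(z)θ₂(w)² − θ₀(z)²θ₀(w)θ₁(w); θ₀²·θ₁(z+w)·θ₀(z−w) = θ₀(z)θ₁(z)θ₁(w)² − θ₂(z)²θ₀(w)θ₂(w); θ₀²·θ₂(z+w)·θ₀(z−w) = θ₀(z)θ₂(z)θ₀(w)² − θ₁(z)²θ₁(w)θ₂(w). -/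
open Complex

/-- The level-three theta function `θ_k(z,τ)`. -/
noncomputable def theta (k : ℤ) (z τ : ℂ) : ℂ :=
  ∑' n : ℤ, Complex.exp (3 * Real.pi * Complex.I * ((n : ℂ) + (k : ℂ) / 3 - 1 / 6) ^ 2 * τ) *
    Complex.exp (6 * Real.pi * Complex.I * ((n : ℂ) + (k : ℂ) / 3 - 1 / 6) * (z + 1 / 2))


set_option maxHeartbeats 1000000

noncomputable def thF (τ a x : ℂ) (n : ℤ) : ℂ :=
  Complex.exp (3 * (Real.pi : ℂ) * Complex.I * ((n : ℂ) + a) ^ 2 * τ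
    + 6 * (Real.pi : ℂ) * Complex.I * ((n : ℂ) + a) * (x + 1 / 2))

noncomputable def quadF (τ x₁ x₂ x₃ x₄ a₁ a₂ a₃ a₄ : ℂ) (p : (ℤ × ℤ) × ℤ × ℤ) : ℂ :=
  (thF τ a₁ x₁ p.1.1 * thF τ a₂ x₂ p.1.2) * (thF τ a₃ x₃ p.2.1 * thF τ a₄ x₄ p.2.2)

lemma theta_eq (k : ℤ) (x τ : ℂ) :
    theta k x τ = ∑' n : ℤ, thF τ ((k : ℂ) / 3 - 1 / 6) x n := by
  unfold theta thF
  refine tsum_congr fun n => ?_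
  rw [← Complex.exp_add]
  congr 1
  ring

lemma theta0_eq (x τ : ℂ) : theta 0 x τ = ∑' n : ℤ, thF τ (-(1 / 6)) x n := by
  have h : (((0 : ℤ) : ℂ)) / 3 - 1 / 6 = -(1 / 6) := by norm_num
  rw [theta_eq, h]

lemma theta1_eq (x τ : ℂ) : theta 1 x τ = ∑' n : ℤ, thF τ (1 / 6) x n := by
  have h : (((1 : ℤ) : ℂ)) / 3 - 1 / 6 = 1 / 6 := by norm_num
  rw [theta_eq, h]

lemma theta2_eq (x τ : ℂ) : theta 2 x τ = ∑' n : ℤ, thF τ (1 / 2) x n := by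
  have h : (((2 : ℤ) : ℂ)) / 3 - 1 / 6 = 1 / 2 := by norm_num
  rw [theta_eq, h]

lemma thF_eq (τ a x : ℂ) (n : ℤ) :
    thF τ a x n = Complex.exp (3 * (Real.pi : ℂ) * Complex.I * a ^ 2 * τ
        + 6 * (Real.pi : ℂ) * Complex.I * a * (x + 1 / 2)) *
      jacobiTheta₂_term n (3 * a * τ + 3 * (x + 1 / 2)) (3 * τ) := by
  unfold thF jacobiTheta₂_term
  rw [← Complex.exp_add]
  congr 1
  ring

lemma thF_norm_summable {τ : ℂ} (hτ : 0 < τ.im) (a x : ℂ) :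
    Summable fun n : ℤ => ‖thF τ a x n‖ := by
  have h3 : 0 < (3 * τ).im := by
    have : (3 * τ).im = 3 * τ.im := by simp [Complex.mul_im]
    rw [this]; linarith
  have hj : Summable fun n : ℤ =>
      ‖jacobiTheta₂_term n (3 * a * τ + 3 * (x + 1 / 2)) (3 * τ)‖ := by
    refine (summable_pow_mul_jacobiTheta₂_term_bound
      |(3 * a * τ + 3 * (x + 1 / 2)).im| h3 0).of_norm_bounded fun n => ?_
    rw [norm_norm]
    simpa only [pow_zero, one_mul] using norm_jacobiTheta₂_term_le h3 le_rfl le_rfl n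
  simp_rw [thF_eq, norm_mul]
  exact hj.mul_left _

lemma tsum_split {ι γ δ : Type*} (f : ι → ℂ) (hf : Summable f) (P : ι → Prop)
    (g₁ : γ → ι) (g₂ : δ → ι) (h₁ : Function.Injective g₁) (h₂ : Function.Injective g₂)
    (hp₁ : ∀ c, P (g₁ c)) (hp₂ : ∀ c, ¬ P (g₂ c))
    (hr₁ : ∀ x, P x → x ∈ Set.range g₁) (hr₂ : ∀ x, ¬ P x → x ∈ Set.range g₂) :
    ∑' x, f x = (∑' c, f (g₁ c)) + (∑' c, f (g₂ c)) := by
  have e₁ : ∑' c, f (g₁ c) = ∑' x, Set.indicator {x | P x} f x := by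
    rw [tsum_congr (fun c => (Set.indicator_of_mem (hp₁ c : g₁ c ∈ {x | P x}) f).symm)]
    exact h₁.tsum_eq (Set.Subset.trans Set.support_indicator_subset hr₁)
  have e₂ : ∑' c, f (g₂ c) = ∑' x, Set.indicator {x | ¬ P x} f x := by
    rw [tsum_congr (fun c => (Set.indicator_of_mem (s := {x | ¬ P x}) (hp₂ c) f).symm)]
    exact h₂.tsum_eq (Set.Subset.trans Set.support_indicator_subset hr₂)
  rw [e₁, e₂, ← Summable.tsum_add (hf.indicator _) (hf.indicator _)]
  refine tsum_congr fun x => ?_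
  by_cases h : P x <;> simp [Set.indicator_apply, h]

lemma cexp_eq_of_sub (t : ℤ) {A B : ℂ} (h : A = B + t * (2 * (Real.pi : ℂ) * Complex.I)) :
    Complex.exp A = Complex.exp B := by
  rw [h, Complex.exp_add, Complex.exp_int_mul_two_pi_mul_I, mul_one]

lemma cexp_eq_neg_of_sub (t : ℤ) {A B : ℂ}
    (h : A = B + t * (2 * (Real.pi : ℂ) * Complex.I) + (Real.pi : ℂ) * Complex.I) :
    Complex.exp A = -Complex.exp B := by
  rw [h, Complex.exp_add, Complex.exp_add, Complex.exp_int_mul_two_pi_mul_I, mul_one,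
    Complex.exp_pi_mul_I, mul_neg_one]

lemma quadF_norm_summable {τ : ℂ} (hτ : 0 < τ.im) (x₁ x₂ x₃ x₄ a₁ a₂ a₃ a₄ : ℂ) :
    Summable fun p => ‖quadF τ x₁ x₂ x₃ x₄ a₁ a₂ a₃ a₄ p‖ := by
  have h12 := (thF_norm_summable hτ a₁ x₁).mul_norm (thF_norm_summable hτ a₂ x₂)
  have h34 := (thF_norm_summable hτ a₃ x₃).mul_norm (thF_norm_summable hτ a₄ x₄)
  have h := h12.mul_norm h34
  simp only [quadF]
  exact h

lemma quadF_tsum {τ : ℂ} (hτ : 0 < τ.im) (x₁ x₂ x₃ x₄ a₁ a₂ a₃ a₄ : ℂ) :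
    ((∑' n : ℤ, thF τ a₁ x₁ n) * (∑' n : ℤ, thF τ a₂ x₂ n)) *
      ((∑' n : ℤ, thF τ a₃ x₃ n) * (∑' n : ℤ, thF τ a₄ x₄ n)) =
    ∑' p : (ℤ × ℤ) × ℤ × ℤ, quadF τ x₁ x₂ x₃ x₄ a₁ a₂ a₃ a₄ p := by
  rw [tsum_mul_tsum_of_summable_norm (thF_norm_summable hτ a₁ x₁) (thF_norm_summable hτ a₂ x₂),
    tsum_mul_tsum_of_summable_norm (thF_norm_summable hτ a₃ x₃) (thF_norm_summable hτ a₄ x₄),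
    tsum_mul_tsum_of_summable_norm
      ((thF_norm_summable hτ a₁ x₁).mul_norm (thF_norm_summable hτ a₂ x₂))
      ((thF_norm_summable hτ a₃ x₃).mul_norm (thF_norm_summable hτ a₄ x₄))]
  rfl

lemma skeleton {τ : ℂ} (hτ : 0 < τ.im) (z w : ℂ)
    (a₁ a₂ a₃ a₄ d₁ d₂ d₃ d₄ e₁ e₂ e₃ e₄ : ℂ)
    (gL1 gL2 g11 g21 b1b b2b : (ℤ × ℤ) × ℤ × ℤ → (ℤ × ℤ) × ℤ × ℤ)
    (PL P1 P2 : (ℤ × ℤ) × ℤ × ℤ → Prop)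
    (hgL1 : Function.Injective gL1) (hgL2 : Function.Injective gL2)
    (hg11 : Function.Injective g11) (hg21 : Function.Injective g21)
    (hb1b : Function.Injective b1b) (hb2b : Function.Injective b2b)
    (hpL1 : ∀ c, PL (gL1 c)) (hpL2 : ∀ c, ¬ PL (gL2 c))
    (hrL1 : ∀ x, PL x → x ∈ Set.range gL1) (hrL2 : ∀ x, ¬ PL x → x ∈ Set.range gL2)
    (hp11 : ∀ c, P1 (g11 c)) (hp1b : ∀ c, ¬ P1 (b1b c))
    (hr11 : ∀ x, P1 x → x ∈ Set.range g11) (hr1b : ∀ x, ¬ P1 x → x ∈ Set.range b1b)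
    (hp21 : ∀ c, P2 (g21 c)) (hp2b : ∀ c, ¬ P2 (b2b c))
    (hr21 : ∀ x, P2 x → x ∈ Set.range g21) (hr2b : ∀ x, ¬ P2 x → x ∈ Set.range b2b)
    (hterm1 : ∀ p, quadF τ 0 0 (z + w) (z - w) a₁ a₂ a₃ a₄ (gL1 p)
      = quadF τ z z w w d₁ d₂ d₃ d₄ (g11 p))
    (hterm2 : ∀ p, quadF τ 0 0 (z + w) (z - w) a₁ a₂ a₃ a₄ (gL2 p)
      = -quadF τ z z w w e₁ e₂ e₃ e₄ (g21 p))
    (hterm3 : ∀ p, quadF τ z z w w d₁ d₂ d₃ d₄ (b1b p)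
      = quadF τ z z w w e₁ e₂ e₃ e₄ (b2b p)) :
    ((∑' n : ℤ, thF τ a₁ 0 n) * (∑' n : ℤ, thF τ a₂ 0 n)) *
      ((∑' n : ℤ, thF τ a₃ (z + w) n) * (∑' n : ℤ, thF τ a₄ (z - w) n)) =
    ((∑' n : ℤ, thF τ d₁ z n) * (∑' n : ℤ, thF τ d₂ z n)) *
      ((∑' n : ℤ, thF τ d₃ w n) * (∑' n : ℤ, thF τ d₄ w n)) -
    ((∑' n : ℤ, thF τ e₁ z n) * (∑' n : ℤ, thF τ e₂ z n)) *
      ((∑' n : ℤ, thF τ e₃ w n) * (∑' n : ℤ, thF τ e₄ w n)) := by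
  rw [quadF_tsum hτ 0 0 (z + w) (z - w) a₁ a₂ a₃ a₄,
    quadF_tsum hτ z z w w d₁ d₂ d₃ d₄, quadF_tsum hτ z z w w e₁ e₂ e₃ e₄]
  have eL : ∑' p, quadF τ 0 0 (z + w) (z - w) a₁ a₂ a₃ a₄ p
      = (∑' c, quadF τ 0 0 (z + w) (z - w) a₁ a₂ a₃ a₄ (gL1 c))
        + (∑' c, quadF τ 0 0 (z + w) (z - w) a₁ a₂ a₃ a₄ (gL2 c)) :=
    tsum_split _ ((quadF_norm_summable hτ 0 0 (z + w) (z - w) a₁ a₂ a₃ a₄).of_norm)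
      PL gL1 gL2 hgL1 hgL2 hpL1 hpL2 hrL1 hrL2
  have eR1 : ∑' p, quadF τ z z w w d₁ d₂ d₃ d₄ p
      = (∑' c, quadF τ z z w w d₁ d₂ d₃ d₄ (g11 c))
        + (∑' c, quadF τ z z w w d₁ d₂ d₃ d₄ (b1b c)) :=
    tsum_split _ ((quadF_norm_summable hτ z z w w d₁ d₂ d₃ d₄).of_norm)
      P1 g11 b1b hg11 hb1b hp11 hp1b hr11 hr1b
  have eR2 : ∑' p, quadF τ z z w w e₁ e₂ e₃ e₄ p
      = (∑' c, quadF τ z z w w e₁ e₂ e₃ e₄ (g21 c))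
        + (∑' c, quadF τ z z w w e₁ e₂ e₃ e₄ (b2b c)) :=
    tsum_split _ ((quadF_norm_summable hτ z z w w e₁ e₂ e₃ e₄).of_norm)
      P2 g21 b2b hg21 hb2b hp21 hp2b hr21 hr2b
  rw [eL, eR1, eR2, tsum_congr hterm1, tsum_congr hterm2, tsum_congr hterm3, tsum_neg]
  ring

lemma key0 (τ : ℂ) (hτ : 0 < τ.im) (z w : ℂ) :
    theta 0 0 τ ^ 2 * theta 0 (z + w) τ * theta 0 (z - w) τ =
      theta 1 z τ * theta 2 z τ * (theta 2 w τ * theta 2 w τ)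
        - theta 0 z τ * theta 0 z τ * (theta 0 w τ * theta 1 w τ) := by
  have h := skeleton hτ z w (-(1 / 6)) (-(1 / 6)) (-(1 / 6)) (-(1 / 6)) (1 / 6) (1 / 2) (1 / 2) (1 / 2) (-(1 / 6)) (-(1 / 6)) (-(1 / 6)) (1 / 6)
    (fun p => ((p.1.1, p.1.2), (p.2.1, 1 + 2*p.2.2 - p.2.1 - p.1.2 - p.1.1))) (fun p => ((p.1.1, p.1.2), (p.2.1, 2*p.2.2 - p.2.1 - p.1.2 - p.1.1))) (fun p => ((p.2.2, p.2.2 - p.1.2 - p.1.1), (-1 - p.2.2 + p.2.1 + p.1.1, -1 - p.2.2 + p.2.1 + p.1.2))) (fun p => ((p.2.2 - p.1.2, p.2.2 - p.1.1), (-p.2.2 + p.2.1 + p.1.2 + p.1.1, -p.2.2 + p.2.1))) (fun p => ((p.1.1, p.1.2), (p.2.1, 1 + 2*p.2.2 - p.2.1 - p.1.2 - p.1.1))) (fun p => ((-p.2.2 + p.2.1 + p.1.2 + p.1.1, 1 + p.2.2 - p.2.1), (1 + p.2.2 - p.1.2, 1 + p.2.2 - p.1.1)))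
    (fun p => (p.1.1 + p.1.2 + p.2.1 + p.2.2) % 2 = 1) (fun p => (p.1.1 + p.1.2 + p.2.1 + p.2.2) % 2 = 0) (fun p => (p.1.1 + p.1.2 + p.2.1 + p.2.2) % 2 = 0)
    (by rintro ⟨⟨a1, a2⟩, a3, a4⟩ ⟨⟨b1, b2⟩, b3, b4⟩ h; simp only [Prod.mk.injEq] at h ⊢; omega)
    (by rintro ⟨⟨a1, a2⟩, a3, a4⟩ ⟨⟨b1, b2⟩, b3, b4⟩ h; simp only [Prod.mk.injEq] at h ⊢; omega)
    (by rintro ⟨⟨a1, a2⟩, a3, a4⟩ ⟨⟨b1, b2⟩, b3, b4⟩ h; simp only [Prod.mk.injEq] at h ⊢; omega)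
    (by rintro ⟨⟨a1, a2⟩, a3, a4⟩ ⟨⟨b1, b2⟩, b3, b4⟩ h; simp only [Prod.mk.injEq] at h ⊢; omega)
    (by rintro ⟨⟨a1, a2⟩, a3, a4⟩ ⟨⟨b1, b2⟩, b3, b4⟩ h; simp only [Prod.mk.injEq] at h ⊢; omega)
    (by rintro ⟨⟨a1, a2⟩, a3, a4⟩ ⟨⟨b1, b2⟩, b3, b4⟩ h; simp only [Prod.mk.injEq] at h ⊢; omega)
    (by rintro ⟨⟨c1, c2⟩, c3, c4⟩; dsimp only; omega)
    (by rintro ⟨⟨c1, c2⟩, c3, c4⟩; dsimp only; omega)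
    (by rintro ⟨⟨x1, x2⟩, x3, x4⟩ hx; dsimp only at hx; exact ⟨((x1, x2), (x3, (x1 + x2 + x3 + x4 - 1) / 2)), by dsimp only; simp only [Prod.mk.injEq, true_and, and_true]; omega⟩)
    (by rintro ⟨⟨x1, x2⟩, x3, x4⟩ hx; dsimp only at hx; exact ⟨((x1, x2), (x3, (x1 + x2 + x3 + x4 - 0) / 2)), by dsimp only; simp only [Prod.mk.injEq, true_and, and_true]; omega⟩)
    (by rintro ⟨⟨c1, c2⟩, c3, c4⟩; dsimp only; omega)
    (by rintro ⟨⟨c1, c2⟩, c3, c4⟩; dsimp only; omega)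
    (by rintro ⟨⟨x1, x2⟩, x3, x4⟩ hx; dsimp only at hx; exact ⟨((-(x1 + x2 + x3 + x4 - 0) / 2 + x3 + x1, (x1 + x2 + x3 + x4 - 0) / 2 - x3 - x2), (1 + (x1 + x2 + x3 + x4 - 0) / 2, x1)), by dsimp only; simp only [Prod.mk.injEq, true_and, and_true]; omega⟩)
    (by rintro ⟨⟨x1, x2⟩, x3, x4⟩ hx; dsimp only at hx; exact ⟨((x1, x2), (x3, (x1 + x2 + x3 + x4 - 1) / 2)), by dsimp only; simp only [Prod.mk.injEq, true_and, and_true]; omega⟩)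
    (by rintro ⟨⟨c1, c2⟩, c3, c4⟩; dsimp only; omega)
    (by rintro ⟨⟨c1, c2⟩, c3, c4⟩; dsimp only; omega)
    (by rintro ⟨⟨x1, x2⟩, x3, x4⟩ hx; dsimp only at hx; exact ⟨((-(x1 + x2 + x3 + x4 - 0) / 2 + x3 + x1, -(x1 + x2 + x3 + x4 - 0) / 2 + x3 + x2), ((x1 + x2 + x3 + x4 - 0) / 2, -(x1 + x2 + x3 + x4 - 0) / 2 + x3 + x2 + x1)), by dsimp only; simp only [Prod.mk.injEq, true_and, and_true]; omega⟩)
    (by rintro ⟨⟨x1, x2⟩, x3, x4⟩ hx; dsimp only at hx; exact ⟨((-1 - (x1 + x2 + x3 + x4 - 1) / 2 + x3 + x2 + x1, (x1 + x2 + x3 + x4 - 1) / 2 - x3), ((x1 + x2 + x3 + x4 - 1) / 2 - x2, -1 + (x1 + x2 + x3 + x4 - 1) / 2)), by dsimp only; simp only [Prod.mk.injEq, true_and, and_true]; omega⟩)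
    (by rintro ⟨⟨c1, c2⟩, c3, c4⟩; simp only [quadF, thF, ← Complex.exp_add]; exact cexp_eq_of_sub (1 + 3*c4 - 3*c3) (by push_cast; ring))
    (by rintro ⟨⟨c1, c2⟩, c3, c4⟩; simp only [quadF, thF, ← Complex.exp_add]; exact cexp_eq_neg_of_sub (-1 + 3*c4 - 3*c3) (by push_cast; ring))
    (by rintro ⟨⟨c1, c2⟩, c3, c4⟩; simp only [quadF, thF, ← Complex.exp_add]; exact cexp_eq_of_sub (0) (by push_cast; ring))
  simp only [theta0_eq, theta1_eq, theta2_eq]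
  linear_combination h

lemma key1 (τ : ℂ) (hτ : 0 < τ.im) (z w : ℂ) :
    theta 0 0 τ ^ 2 * theta 1 (z + w) τ * theta 0 (z - w) τ =
      theta 0 z τ * theta 1 z τ * (theta 1 w τ * theta 1 w τ)
        - theta 2 z τ * theta 2 z τ * (theta 0 w τ * theta 2 w τ) := by
  have h := skeleton hτ z w (-(1 / 6)) (-(1 / 6)) (1 / 6) (-(1 / 6)) (-(1 / 6)) (1 / 6) (1 / 6) (1 / 6) (1 / 2) (1 / 2) (-(1 / 6)) (1 / 2)
    (fun p => ((p.1.1, p.1.2), (p.2.1, 2*p.2.2 - p.2.1 - p.1.2 - p.1.1))) (fun p => ((p.1.1, p.1.2), (p.2.1, 1 + 2*p.2.2 - p.2.1 - p.1.2 - p.1.1))) (fun p => ((p.2.2, p.2.2 - p.1.2 - p.1.1), (-p.2.2 + p.2.1 + p.1.1, -p.2.2 + p.2.1 + p.1.2))) (fun p => ((p.2.2 - p.1.2, p.2.2 - p.1.1), (-p.2.2 + p.2.1, -1 - p.2.2 + p.2.1 + p.1.2 + p.1.1))) (fun p => ((p.1.1, p.1.2), (p.2.1, 1 + 2*p.2.2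 - p.2.1 - p.1.2 - p.1.1))) (fun p => ((-1 - p.2.2 + p.2.1 + p.1.2 + p.1.1, p.2.2 - p.2.1), (1 + p.2.2 - p.1.1, p.2.2 - p.1.2)))
    (fun p => (p.1.1 + p.1.2 + p.2.1 + p.2.2) % 2 = 0) (fun p => (p.1.1 + p.1.2 + p.2.1 + p.2.2) % 2 = 0) (fun p => (p.1.1 + p.1.2 + p.2.1 + p.2.2) % 2 = 1)
    (by rintro ⟨⟨a1, a2⟩, a3, a4⟩ ⟨⟨b1, b2⟩, b3, b4⟩ h; simp only [Prod.mk.injEq] at h ⊢; omega)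
    (by rintro ⟨⟨a1, a2⟩, a3, a4⟩ ⟨⟨b1, b2⟩, b3, b4⟩ h; simp only [Prod.mk.injEq] at h ⊢; omega)
    (by rintro ⟨⟨a1, a2⟩, a3, a4⟩ ⟨⟨b1, b2⟩, b3, b4⟩ h; simp only [Prod.mk.injEq] at h ⊢; omega)
    (by rintro ⟨⟨a1, a2⟩, a3, a4⟩ ⟨⟨b1, b2⟩, b3, b4⟩ h; simp only [Prod.mk.injEq] at h ⊢; omega)
    (by rintro ⟨⟨a1, a2⟩, a3, a4⟩ ⟨⟨b1, b2⟩, b3, b4⟩ h; simp only [Prod.mk.injEq] at h ⊢; omega)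
    (by rintro ⟨⟨a1, a2⟩, a3, a4⟩ ⟨⟨b1, b2⟩, b3, b4⟩ h; simp only [Prod.mk.injEq] at h ⊢; omega)
    (by rintro ⟨⟨c1, c2⟩, c3, c4⟩; dsimp only; omega)
    (by rintro ⟨⟨c1, c2⟩, c3, c4⟩; dsimp only; omega)
    (by rintro ⟨⟨x1, x2⟩, x3, x4⟩ hx; dsimp only at hx; exact ⟨((x1, x2), (x3, (x1 + x2 + x3 + x4 - 0) / 2)), by dsimp only; simp only [Prod.mk.injEq, true_and, and_true]; omega⟩)
    (by rintro ⟨⟨x1, x2⟩, x3, x4⟩ hx; dsimp only at hx; exact ⟨((x1, x2), (x3, (x1 + x2 + x3 + x4 - 1) / 2)), by dsimp only; simp only [Prod.mk.injEq, true_and, and_true]; omega⟩)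
    (by rintro ⟨⟨c1, c2⟩, c3, c4⟩; dsimp only; omega)
    (by rintro ⟨⟨c1, c2⟩, c3, c4⟩; dsimp only; omega)
    (by rintro ⟨⟨x1, x2⟩, x3, x4⟩ hx; dsimp only at hx; exact ⟨((-(x1 + x2 + x3 + x4 - 0) / 2 + x3 + x1, (x1 + x2 + x3 + x4 - 0) / 2 - x3 - x2), ((x1 + x2 + x3 + x4 - 0) / 2, x1)), by dsimp only; simp only [Prod.mk.injEq, true_and, and_true]; omega⟩)
    (by rintro ⟨⟨x1, x2⟩, x3, x4⟩ hx; dsimp only at hx; exact ⟨((x1, x2), (x3, (x1 + x2 + x3 + x4 - 1) / 2)), by dsimp only; simp only [Prod.mk.injEq, true_and, and_true]; omega⟩)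
    (by rintro ⟨⟨c1, c2⟩, c3, c4⟩; dsimp only; omega)
    (by rintro ⟨⟨c1, c2⟩, c3, c4⟩; dsimp only; omega)
    (by rintro ⟨⟨x1, x2⟩, x3, x4⟩ hx; dsimp only at hx; exact ⟨((1 + (x1 + x2 + x3 + x4 - 1) / 2 - x3 - x2, 1 + (x1 + x2 + x3 + x4 - 1) / 2 - x3 - x1), (1 + (x1 + x2 + x3 + x4 - 1) / 2, 1 + (x1 + x2 + x3 + x4 - 1) / 2 - x3)), by dsimp only; simp only [Prod.mk.injEq, true_and, and_true]; omega⟩)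
    (by rintro ⟨⟨x1, x2⟩, x3, x4⟩ hx; dsimp only at hx; exact ⟨((1 + (x1 + x2 + x3 + x4 - 0) / 2 - x3, -(x1 + x2 + x3 + x4 - 0) / 2 + x3 + x2 + x1), ((x1 + x2 + x3 + x4 - 0) / 2 - x2, (x1 + x2 + x3 + x4 - 0) / 2)), by dsimp only; simp only [Prod.mk.injEq, true_and, and_true]; omega⟩)
    (by rintro ⟨⟨c1, c2⟩, c3, c4⟩; simp only [quadF, thF, ← Complex.exp_add]; exact cexp_eq_of_sub (-1 + 3*c4 - 3*c3) (by push_cast; ring))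
    (by rintro ⟨⟨c1, c2⟩, c3, c4⟩; simp only [quadF, thF, ← Complex.exp_add]; exact cexp_eq_neg_of_sub (3*c4 - 3*c3) (by push_cast; ring))
    (by rintro ⟨⟨c1, c2⟩, c3, c4⟩; simp only [quadF, thF, ← Complex.exp_add]; exact cexp_eq_of_sub (0) (by push_cast; ring))
  simp only [theta0_eq, theta1_eq, theta2_eq]
  linear_combination h

lemma key2 (τ : ℂ) (hτ : 0 < τ.im) (z w : ℂ) :
    theta 0 0 τ ^ 2 * theta 2 (z + w) τ * theta 0 (z - w) τ =
      theta 0 z τ * theta 2 z τ * (theta 0 w τ * theta 0 w τ)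
        - theta 1 z τ * theta 1 z τ * (theta 1 w τ * theta 2 w τ) := by
  have h := skeleton hτ z w (-(1 / 6)) (-(1 / 6)) (1 / 2) (-(1 / 6)) (-(1 / 6)) (1 / 2) (-(1 / 6)) (-(1 / 6)) (1 / 6) (1 / 6) (1 / 6) (1 / 2)
    (fun p => ((p.1.1, p.1.2), (p.2.1, 1 + 2*p.2.2 - p.2.1 - p.1.2 - p.1.1))) (fun p => ((p.1.1, p.1.2), (p.2.1, 2*p.2.2 - p.2.1 - p.1.2 - p.1.1))) (fun p => ((1 + p.2.2 - p.1.2 - p.1.1, p.2.2), (-p.2.2 + p.2.1 + p.1.1, -p.2.2 + p.2.1 + p.1.2))) (fun p => ((p.2.2 - p.1.2, p.2.2 - p.1.1), (-p.2.2 + p.2.1 + p.1.2 + p.1.1, -p.2.2 + p.2.1))) (fun p => ((p.1.1, p.1.2), (p.2.1, 2*p.2.2 - p.2.1 - p.1.2 - p.1.1))) (fun p => ((-p.2.2 + p.2.1 + p.1.2 + p.1.1, p.2.2 - p.2.1), (p.2.2 - p.1.1, -1 + p.2.2 - p.1.2)))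
    (fun p => (p.1.1 + p.1.2 + p.2.1 + p.2.2) % 2 = 1) (fun p => (p.1.1 + p.1.2 + p.2.1 + p.2.2) % 2 = 1) (fun p => (p.1.1 + p.1.2 + p.2.1 + p.2.2) % 2 = 0)
    (by rintro ⟨⟨a1, a2⟩, a3, a4⟩ ⟨⟨b1, b2⟩, b3, b4⟩ h; simp only [Prod.mk.injEq] at h ⊢; omega)
    (by rintro ⟨⟨a1, a2⟩, a3, a4⟩ ⟨⟨b1, b2⟩, b3, b4⟩ h; simp only [Prod.mk.injEq] at h ⊢; omega)
    (by rintro ⟨⟨a1, a2⟩, a3, a4⟩ ⟨⟨b1, b2⟩, b3, b4⟩ h; simp only [Prod.mk.injEq] at h ⊢; omega)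
    (by rintro ⟨⟨a1, a2⟩, a3, a4⟩ ⟨⟨b1, b2⟩, b3, b4⟩ h; simp only [Prod.mk.injEq] at h ⊢; omega)
    (by rintro ⟨⟨a1, a2⟩, a3, a4⟩ ⟨⟨b1, b2⟩, b3, b4⟩ h; simp only [Prod.mk.injEq] at h ⊢; omega)
    (by rintro ⟨⟨a1, a2⟩, a3, a4⟩ ⟨⟨b1, b2⟩, b3, b4⟩ h; simp only [Prod.mk.injEq] at h ⊢; omega)
    (by rintro ⟨⟨c1, c2⟩, c3, c4⟩; dsimp only; omega)
    (by rintro ⟨⟨c1, c2⟩, c3, c4⟩; dsimp only; omega)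
    (by rintro ⟨⟨x1, x2⟩, x3, x4⟩ hx; dsimp only at hx; exact ⟨((x1, x2), (x3, (x1 + x2 + x3 + x4 - 1) / 2)), by dsimp only; simp only [Prod.mk.injEq, true_and, and_true]; omega⟩)
    (by rintro ⟨⟨x1, x2⟩, x3, x4⟩ hx; dsimp only at hx; exact ⟨((x1, x2), (x3, (x1 + x2 + x3 + x4 - 0) / 2)), by dsimp only; simp only [Prod.mk.injEq, true_and, and_true]; omega⟩)
    (by rintro ⟨⟨c1, c2⟩, c3, c4⟩; dsimp only; omega)
    (by rintro ⟨⟨c1, c2⟩, c3, c4⟩; dsimp only; omega)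
    (by rintro ⟨⟨x1, x2⟩, x3, x4⟩ hx; dsimp only at hx; exact ⟨((-(x1 + x2 + x3 + x4 - 1) / 2 + x3 + x2, 1 + (x1 + x2 + x3 + x4 - 1) / 2 - x3 - x1), ((x1 + x2 + x3 + x4 - 1) / 2, x2)), by dsimp only; simp only [Prod.mk.injEq, true_and, and_true]; omega⟩)
    (by rintro ⟨⟨x1, x2⟩, x3, x4⟩ hx; dsimp only at hx; exact ⟨((x1, x2), (x3, (x1 + x2 + x3 + x4 - 0) / 2)), by dsimp only; simp only [Prod.mk.injEq, true_and, and_true]; omega⟩)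
    (by rintro ⟨⟨c1, c2⟩, c3, c4⟩; dsimp only; omega)
    (by rintro ⟨⟨c1, c2⟩, c3, c4⟩; dsimp only; omega)
    (by rintro ⟨⟨x1, x2⟩, x3, x4⟩ hx; dsimp only at hx; exact ⟨((-(x1 + x2 + x3 + x4 - 0) / 2 + x3 + x1, -(x1 + x2 + x3 + x4 - 0) / 2 + x3 + x2), ((x1 + x2 + x3 + x4 - 0) / 2, -(x1 + x2 + x3 + x4 - 0) / 2 + x3 + x2 + x1)), by dsimp only; simp only [Prod.mk.injEq, true_and, and_true]; omega⟩)
    (by rintro ⟨⟨x1, x2⟩, x3, x4⟩ hx; dsimp only at hx; exact ⟨((1 + (x1 + x2 + x3 + x4 - 1) / 2 - x3, -1 - (x1 + x2 + x3 + x4 - 1) / 2 + x3 + x2 + x1), (1 + (x1 + x2 + x3 + x4 - 1) / 2 - x2, 1 + (x1 + x2 + x3 + x4 - 1) / 2)), by dsimp only; simp only [Prod.mk.injEq, true_and, and_true]; omega⟩)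
    (by rintro ⟨⟨c1, c2⟩, c3, c4⟩; simp only [quadF, thF, ← Complex.exp_add]; exact cexp_eq_of_sub (3*c4 - 3*c3) (by push_cast; ring))
    (by rintro ⟨⟨c1, c2⟩, c3, c4⟩; simp only [quadF, thF, ← Complex.exp_add]; exact cexp_eq_neg_of_sub (-2 + 3*c4 - 3*c3) (by push_cast; ring))
    (by rintro ⟨⟨c1, c2⟩, c3, c4⟩; simp only [quadF, thF, ← Complex.exp_add]; exact cexp_eq_of_sub (0) (by push_cast; ring))
  simp only [theta0_eq, theta1_eq, theta2_eq]
  linear_combination h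

theorem addition_formulae_first_triple (τ : ℂ) (hτ : 0 < τ.im) (z w : ℂ) :
    (theta 0 0 τ) ^ 2 * theta 0 (z + w) τ * theta 0 (z - w) τ =
      theta 1 z τ * theta 2 z τ * (theta 2 w τ) ^ 2
        - (theta 0 z τ) ^ 2 * theta 0 w τ * theta 1 w τ ∧
    (theta 0 0 τ) ^ 2 * theta 1 (z + w) τ * theta 0 (z - w) τ =
      theta 0 z τ * theta 1 z τ * (theta 1 w τ) ^ 2
        - (theta 2 z τ) ^ 2 * theta 0 w τ * theta 2 w τ ∧
    (theta 0 0 τ) ^ 2 * theta 2 (z + w) τ * theta 0 (z - w) τ =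
      theta 0 z τ * theta 2 z τ * (theta 0 w τ) ^ 2
        - (theta 1 z τ) ^ 2 * theta 1 w τ * theta 2 w τ := by
  exact ⟨key0 τ hτ z w |>.trans (by ring), key1 τ hτ z w |>.trans (by ring),
    key2 τ hτ z w |>.trans (by ring)⟩
end

section
/- Let K > 0, ε > 0, τ_ε := −3K/(9K + 2πiε), and ξ_ε := 2πε/(9K). For every real u, setting z := (1 − iξ_ε)u/(9K), the three products θ₀(z,τ_ε)·conj(θ₂(z,τ_ε)), θ₁(z,τ_ε)·conj(θ₂(z,τ_ε)), and θ₀(z,τ_ε)·conj(θ₁(z,τ_ε)) are real numbers; equivalently, the point (θ₂(z,τ_ε), θ₀(z,τ_ε), θ₁(z,τ_ε)) lies in the real projective plane, i.e. on the real part of the Hesse cubic curve. -/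
set_option maxHeartbeats 1000000


open Complex

lemma theta_eq_jacobi (k : ℤ) (z τ : ℂ) :
    theta k z τ =
      Complex.exp (3 * Real.pi * Complex.I * ((k : ℂ) / 3 - 1 / 6) ^ 2 * τ +
          6 * Real.pi * Complex.I * ((k : ℂ) / 3 - 1 / 6) * (z + 1 / 2)) *
        jacobiTheta₂ (3 * ((k : ℂ) / 3 - 1 / 6) * τ + 3 * (z + 1 / 2)) (3 * τ) := by
  rw [theta, jacobiTheta₂, ← tsum_mul_left]
  refine tsum_congr fun n => ?_
  rw [jacobiTheta₂_term, ← Complex.exp_add, ← Complex.exp_add]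
  congr 1
  ring

lemma theta_conj (k : ℤ) (z τ : ℂ) :
    (starRingEnd ℂ) (theta k z τ) =
      theta k (-(starRingEnd ℂ) z - 1) (-(starRingEnd ℂ) τ) := by
  rw [theta, theta, conj_tsum]
  refine tsum_congr fun n => ?_
  rw [map_mul, ← Complex.exp_conj, ← Complex.exp_conj, ← Complex.exp_add, ← Complex.exp_add]
  congr 1
  simp only [map_mul, map_add, map_sub, map_div₀, map_pow, map_ofNat, map_one,
    Complex.conj_I, Complex.conj_ofReal, map_intCast]
  ring

lemma jt_shift (x t : ℂ) :
    jacobiTheta₂ (x + (3 * t - 3)) t =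
      Complex.exp (-Real.pi * Complex.I * (9 * t + 6 * x)) * jacobiTheta₂ x t := by
  have h1 : jacobiTheta₂ (x + (3 * t - 3)) t = jacobiTheta₂ (x + 2 * t + t) t := by
    have e1 := jacobiTheta₂_add_left (x + (3 * t - 3)) t
    have e2 := jacobiTheta₂_add_left (x + (3 * t - 3) + 1) t
    have e3 := jacobiTheta₂_add_left (x + (3 * t - 3) + 1 + 1) t
    rw [show x + 2 * t + t = x + (3 * t - 3) + 1 + 1 + 1 by ring, e3, e2, e1]
  rw [h1, jacobiTheta₂_add_left' (x + 2 * t) t,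
    show x + 2 * t = x + t + t by ring, jacobiTheta₂_add_left' (x + t) t,
    jacobiTheta₂_add_left' x t, ← mul_assoc, ← mul_assoc, ← Complex.exp_add, ← Complex.exp_add]
  congr 2
  push_cast
  ring

/-- Along the circle `l_ε`, the point `(θ₂(z), θ₀(z), θ₁(z))` lies on the real part of
the Hesse cubic: the pairwise products with conjugates are real. -/
theorem theta_real_on_circle (K ε u : ℝ) (hK : 0 < K) (hε : 0 < ε)
    (τ : ℂ) (hτ : τ = -3 * K / (9 * K + 2 * Real.pi * Complex.I * ε))
    (ξ : ℝ) (hξ : ξ = 2 * Real.pi * ε / (9 * K))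
    (z : ℂ) (hz : z = (1 - Complex.I * ξ) * u / (9 * K)) :
    (theta 0 z τ * (starRingEnd ℂ) (theta 2 z τ)).im = 0 ∧
    (theta 1 z τ * (starRingEnd ℂ) (theta 2 z τ)).im = 0 ∧
    (theta 0 z τ * (starRingEnd ℂ) (theta 1 z τ)).im = 0 := by
  have hπ : (0:ℝ) < Real.pi := Real.pi_pos
  have hK0 : (K:ℂ) ≠ 0 := by exact_mod_cast hK.ne'
  have hw : (9 * (K:ℂ) + 2 * Real.pi * Complex.I * ε) ≠ 0 := by
    intro h
    have := congrArg Complex.re h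
    simp [Complex.add_re, Complex.mul_re] at this
    nlinarith
  have hwb : (9 * (K:ℂ) - 2 * Real.pi * Complex.I * ε) ≠ 0 := by
    intro h
    have := congrArg Complex.re h
    simp [Complex.sub_re, Complex.mul_re] at this
    nlinarith
  have hτ0 : τ ≠ 0 := by
    rw [hτ]
    refine div_ne_zero ?_ hw
    intro h
    have := congrArg Complex.re h
    simp at this
    nlinarith
  have hτb : (starRingEnd ℂ) τ = -3 * K / (9 * K - 2 * Real.pi * Complex.I * ε) := by
    rw [hτ, map_div₀]
    simp [map_mul, map_add, Complex.conj_I, Complex.conj_ofReal, map_ofNat]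
    ring
  have hτb0 : (starRingEnd ℂ) τ ≠ 0 := by
    rw [hτb]
    refine div_ne_zero ?_ hwb
    intro h
    have := congrArg Complex.re h
    simp at this
    nlinarith
  have hzb : (starRingEnd ℂ) z = (1 + Complex.I * ξ) * u / (9 * K) := by
    rw [hz, map_div₀]
    simp [map_mul, map_sub, Complex.conj_I, Complex.conj_ofReal, map_ofNat]
    try ring
  -- abbreviations
  set τ' : ℂ := 1 + Complex.I * ξ with hτ'def
  set v : ℤ → ℂ := fun k => ((k : ℂ) / 3 - 1 / 6) + (z + 1 / 2) / τ with hv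
  set P : ℂ := 1 / (-Complex.I * (3 * τ)) ^ ((1:ℂ) / 2) with hP
  set Pc : ℂ := 1 / (-Complex.I * (3 * (-(starRingEnd ℂ) τ))) ^ ((1:ℂ) / 2) with hPc
  set g₀ : ℂ := -3 * Real.pi * Complex.I * (z + 1 / 2) ^ 2 / τ with hg
  set c₀ : ℂ := 3 * Real.pi * Complex.I * ((starRingEnd ℂ) z + 1 / 2) ^ 2 / (starRingEnd ℂ) τ
      - 9 * Real.pi * Complex.I * τ' - 6 * Real.pi * Complex.I * (z + 1 / 2) / τ
      + Real.pi * Complex.I with hc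
  -- key numeric identities
  have hN1 : (-1 : ℂ) / (3 * τ) = τ' := by
    rw [hτ, hτ'def, hξ]
    push_cast
    field_simp
    ring
  have hN4 : (-1 : ℂ) / (3 * (-(starRingEnd ℂ) τ)) = τ' - 2 := by
    rw [hτb, hτ'def, hξ]
    push_cast
    field_simp
    ring
  have hfac : ∀ k : ℤ, theta k z τ = Complex.exp g₀ * P * jacobiTheta₂ (v k) τ' := by
    intro k
    rw [theta_eq_jacobi, jacobiTheta₂_functional_equation, hN1]
    have hZ : (3 * ((k : ℂ) / 3 - 1 / 6) * τ + 3 * (z + 1 / 2)) / (3 * τ) = v k := by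
      rw [hv]
      field_simp
    rw [hZ, ← hP]
    rw [show Complex.exp (3 * Real.pi * Complex.I * ((k : ℂ) / 3 - 1 / 6) ^ 2 * τ +
          6 * Real.pi * Complex.I * ((k : ℂ) / 3 - 1 / 6) * (z + 1 / 2)) *
        (P * Complex.exp (-Real.pi * Complex.I *
            (3 * ((k : ℂ) / 3 - 1 / 6) * τ + 3 * (z + 1 / 2)) ^ 2 / (3 * τ)) *
          jacobiTheta₂ (v k) τ') =
        (Complex.exp (3 * Real.pi * Complex.I * ((k : ℂ) / 3 - 1 / 6) ^ 2 * τ +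
          6 * Real.pi * Complex.I * ((k : ℂ) / 3 - 1 / 6) * (z + 1 / 2)) *
          Complex.exp (-Real.pi * Complex.I *
            (3 * ((k : ℂ) / 3 - 1 / 6) * τ + 3 * (z + 1 / 2)) ^ 2 / (3 * τ))) * P *
          jacobiTheta₂ (v k) τ' by ring]
    rw [← Complex.exp_add]
    congr 2
    rw [hg]
    field_simp
    ring
  have hconj : ∀ k : ℤ, (starRingEnd ℂ) (theta k z τ)
      = Complex.exp c₀ * Pc * jacobiTheta₂ (v k) τ' := by
    intro k
    rw [theta_conj, theta_eq_jacobi, jacobiTheta₂_functional_equation, hN4]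
    set z₂ : ℂ := -(starRingEnd ℂ) z - 1 with hz2
    set τ₂ : ℂ := -(starRingEnd ℂ) τ with ht2
    have hτ20 : τ₂ ≠ 0 := by
      rw [ht2]
      simpa using hτb0
    have hper : jacobiTheta₂ ((3 * ((k : ℂ) / 3 - 1 / 6) * τ₂ + 3 * (z₂ + 1 / 2)) / (3 * τ₂))
        (τ' - 2) = jacobiTheta₂ ((3 * ((k : ℂ) / 3 - 1 / 6) * τ₂ + 3 * (z₂ + 1 / 2)) / (3 * τ₂))
        τ' := by
      have := jacobiTheta₂_add_right
        ((3 * ((k : ℂ) / 3 - 1 / 6) * τ₂ + 3 * (z₂ + 1 / 2)) / (3 * τ₂)) (τ' - 2)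
      rw [show τ' - 2 + 2 = τ' by ring] at this
      exact this.symm
    rw [hper]
    have hmid : (z₂ + 1 / 2) / τ₂ = (z + 1 / 2) / τ + (3 * τ' - 3) := by
      rw [hz2, ht2, hτb, hzb, hτ, hz, hτ'def, hξ]
      have h9 : ((9:ℂ) * K) ≠ 0 := by simpa using hK0
      have h3 : ((3:ℂ) * K) ≠ 0 := by simpa using hK0
      push_cast
      field_simp
      ring_nf
    have hZ2 : (3 * ((k : ℂ) / 3 - 1 / 6) * τ₂ + 3 * (z₂ + 1 / 2)) / (3 * τ₂)
        = v k + (3 * τ' - 3) := by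
      have e1 : (3 * ((k : ℂ) / 3 - 1 / 6) * τ₂ + 3 * (z₂ + 1 / 2)) / (3 * τ₂)
          = ((k : ℂ) / 3 - 1 / 6) + (z₂ + 1 / 2) / τ₂ := by
        field_simp
      rw [e1, hmid, hv]
      ring
    rw [hZ2, jt_shift, ← hPc]
    rw [show Complex.exp (3 * Real.pi * Complex.I * ((k : ℂ) / 3 - 1 / 6) ^ 2 * τ₂ +
          6 * Real.pi * Complex.I * ((k : ℂ) / 3 - 1 / 6) * (z₂ + 1 / 2)) *
        (Pc * Complex.exp (-Real.pi * Complex.I *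
            (3 * ((k : ℂ) / 3 - 1 / 6) * τ₂ + 3 * (z₂ + 1 / 2)) ^ 2 / (3 * τ₂)) *
          (Complex.exp (-Real.pi * Complex.I * (9 * τ' + 6 * v k)) *
            jacobiTheta₂ (v k) τ')) =
        (Complex.exp (3 * Real.pi * Complex.I * ((k : ℂ) / 3 - 1 / 6) ^ 2 * τ₂ +
          6 * Real.pi * Complex.I * ((k : ℂ) / 3 - 1 / 6) * (z₂ + 1 / 2)) *
          Complex.exp (-Real.pi * Complex.I *
            (3 * ((k : ℂ) / 3 - 1 / 6) * τ₂ + 3 * (z₂ + 1 / 2)) ^ 2 / (3 * τ₂)) *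
          Complex.exp (-Real.pi * Complex.I * (9 * τ' + 6 * v k))) * Pc *
          jacobiTheta₂ (v k) τ' by ring]
    rw [← Complex.exp_add, ← Complex.exp_add]
    congr 2
    have e1 : (3 * Real.pi * Complex.I * ((k : ℂ) / 3 - 1 / 6) ^ 2 * τ₂ +
          6 * Real.pi * Complex.I * ((k : ℂ) / 3 - 1 / 6) * (z₂ + 1 / 2)) +
        (-Real.pi * Complex.I *
            (3 * ((k : ℂ) / 3 - 1 / 6) * τ₂ + 3 * (z₂ + 1 / 2)) ^ 2 / (3 * τ₂)) =
        -3 * Real.pi * Complex.I * (z₂ + 1 / 2) ^ 2 / τ₂ := by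
      field_simp
      try exact Or.inl trivial
      try ring
    have e2 : (-3 : ℂ) * Real.pi * Complex.I * (z₂ + 1 / 2) ^ 2 / τ₂ =
        3 * Real.pi * Complex.I * ((starRingEnd ℂ) z + 1 / 2) ^ 2 / (starRingEnd ℂ) τ := by
      rw [hz2, ht2]
      field_simp
      try ring
      try exact Or.inl trivial
    have hsplit : (3 * Real.pi * Complex.I * ((k : ℂ) / 3 - 1 / 6) ^ 2 * τ₂ +
          6 * Real.pi * Complex.I * ((k : ℂ) / 3 - 1 / 6) * (z₂ + 1 / 2)) +
        (-Real.pi * Complex.I *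
            (3 * ((k : ℂ) / 3 - 1 / 6) * τ₂ + 3 * (z₂ + 1 / 2)) ^ 2 / (3 * τ₂)) +
        (-Real.pi * Complex.I * (9 * τ' + 6 * v k)) = c₀ + (-(k : ℂ)) * (2 * Real.pi * Complex.I)
        := by
      rw [e1, e2, hc, hv]
      ring
    rw [hsplit, Complex.exp_add]
    have h1 : Complex.exp ((-(k : ℂ)) * (2 * Real.pi * Complex.I)) = 1 := by
      rw [show (-(k : ℂ)) = (((-k : ℤ) : ℂ)) by push_cast; ring]
      exact Complex.exp_int_mul_two_pi_mul_I (-k)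
    rw [h1, mul_one]
  refine ⟨?_, ?_, ?_⟩ <;>
  · rw [← Complex.conj_eq_iff_im, map_mul, Complex.conj_conj]
    simp only [hconj]
    simp only [hfac]
    ring
end

section
/- Let K > 0 and δ ∈ (0, 1/6), and set R_δ := ⋃_{j=1}^{3} [(j−1)/3 + δ, j/3 − δ]. For each k ∈ {0,1,2}, as ε → 0⁺ the function a ↦ ε·log|θ_k(−aτ_ε, τ_ε)| converges uniformly on R_δ to a ↦ −(9K/2)·(frac((3Ka − (k+1)K)/(3K)) − 1/2)², where frac(x) := x − ⌊x⌋. -/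
open Complex

/-- The parameter `τ_ε = −3K/(9K + 2πiε)`. -/
noncomputable def tauE (K ε : ℝ) : ℂ :=
  -3 * K / (9 * K + 2 * Real.pi * Complex.I * ε)

/-- The compact set `R_δ = ⋃_{j=1}^{3} [(j−1)/3 + δ, j/3 − δ]`. -/
def Rdelta (δ : ℝ) : Set ℝ :=
  Set.Icc δ (1 / 3 - δ) ∪ Set.Icc (1 / 3 + δ) (2 / 3 - δ) ∪ Set.Icc (2 / 3 + δ) (1 - δ)

set_option maxHeartbeats 2000000

noncomputable def tau3 (ξ : ℝ) : ℂ := -1/(3*(1+Complex.I*ξ))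
noncomputable def Pre (a ξ : ℝ) : ℂ :=
  Real.pi*I*a^2*(1-I*ξ)/((ξ:ℂ)^2+1) + 3*Real.pi*I*a + 9*Real.pi*I/4*(1+I*ξ)
noncomputable def bb (k : ℤ) (a ξ : ℝ) : ℂ := (k:ℂ)/3 - 1/6 - a - 3/2 - 3/2*I*ξ
noncomputable def uu (k : ℤ) (a ξ : ℝ) : ℂ := (k:ℂ)/3 - a - 13/6 - 3/2*I*ξ
noncomputable def rr (k : ℤ) (a : ℝ) : ℝ := (k:ℝ)/3 - a - 13/6

lemma den_ne (ξ : ℝ) : ((ξ:ℂ)^2 + 1) ≠ 0 := by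
  have h : ((ξ:ℂ)^2 + 1) = ((ξ^2+1 : ℝ) : ℂ) := by push_cast; ring
  rw [h, Ne, Complex.ofReal_eq_zero]
  positivity

lemma xi_sub_I_ne (ξ : ℝ) : ((ξ:ℂ) - I) ≠ 0 := by
  intro h
  have := congrArg Complex.im h
  simp at this

lemma one_add_ne (ξ : ℝ) : (1 + Complex.I*(ξ:ℂ)) ≠ 0 := by
  intro h
  have := congrArg Complex.re h
  simp at this

lemma step1 (k : ℤ) (a ξ : ℝ) :
    theta k (-(a:ℂ) * tau3 ξ) (tau3 ξ) =
      cexp (Pre a ξ) * ∑' n : ℤ,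
        cexp (-(Real.pi:ℂ) / ((ξ:ℂ) - I) * ((n:ℂ) + I * (-I * bb k a ξ)) ^ 2) := by
  have hden := den_ne ξ
  have h3 : (3:ℂ) * ((ξ:ℂ)^2+1) ≠ 0 := mul_ne_zero (by norm_num) hden
  have htau : tau3 ξ = (-1 + I*ξ)/(3*((ξ:ℂ)^2+1)) := by
    rw [tau3, div_eq_div_iff (mul_ne_zero (by norm_num) (one_add_ne ξ)) h3]
    linear_combination (-3*(ξ:ℂ)^2) * Complex.I_sq
  have hA : -(Real.pi:ℂ) / ((ξ:ℂ) - I) = (-(Real.pi:ℂ)*((ξ:ℂ)+I))/((ξ:ℂ)^2+1) := by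
    rw [div_eq_div_iff (xi_sub_I_ne ξ) hden]
    linear_combination (-(Real.pi:ℂ)) * Complex.I_sq
  rw [theta, ← tsum_mul_left]
  refine tsum_congr fun n => ?_
  rw [← Complex.exp_add, ← Complex.exp_add]
  congr 1
  rw [htau, hA, Pre, bb]
  have h2 : Complex.I^2 = -1 := Complex.I_sq
  have h3' : Complex.I^3 = -Complex.I := by rw [pow_succ, h2]; ring
  have h4 : Complex.I^4 = 1 := by rw [pow_succ, h3']; simp [Complex.I_mul_I]
  have h5 : Complex.I^5 = Complex.I := by rw [pow_succ, h4]; ring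
  have h6 : Complex.I^6 = -1 := by rw [pow_succ, h5, Complex.I_mul_I]
  have h7 : Complex.I^7 = -Complex.I := by rw [pow_succ, h6]; ring
  have h8 : Complex.I^8 = 1 := by rw [pow_succ, h7]; simp [Complex.I_mul_I]
  have h9 : Complex.I^9 = Complex.I := by rw [pow_succ, h8]; ring
  have h10 : Complex.I^10 = -1 := by rw [pow_succ, h9, Complex.I_mul_I]
  field_simp
  ring_nf
  simp only [h2, h3', h4, h5, h6, h7, h8, h9, h10]
  ring

lemma master (k : ℤ) (a ξ : ℝ) (hξ : 0 < ξ) :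
    theta k (-(a:ℂ) * tau3 ξ) (tau3 ξ) =
      cexp (Pre a ξ) * (((ξ:ℂ) - I) ^ ((1:ℂ)/2) * (1/(ξ:ℂ) ^ ((1:ℂ)/2)) *
        ∑' m : ℤ, cexp (-(Real.pi:ℂ)/ξ * ((m:ℂ) + uu k a ξ)^2)) := by
  have hpow_ne : ((ξ:ℂ)-I) ^ ((1:ℂ)/2) ≠ 0 := by
    rw [Complex.cpow_def_of_ne_zero (xi_sub_I_ne ξ)]
    exact Complex.exp_ne_zero _
  have hB := Complex.tsum_exp_neg_quadratic
    (a := (ξ:ℂ) - I) (by simp [hξ]) (-I * bb k a ξ)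
  have hR : (∑' n : ℤ, cexp (-(Real.pi:ℂ) / ((ξ:ℂ) - I) * ((n:ℂ) + I * (-I * bb k a ξ)) ^ 2))
      = ((ξ:ℂ)-I) ^ ((1:ℂ)/2) *
        ∑' n : ℤ, cexp (-(Real.pi:ℂ) * ((ξ:ℂ)-I) * (n:ℂ)^2 + 2*(Real.pi:ℂ) * (-I * bb k a ξ) * (n:ℂ)) := by
    rw [hB, ← mul_assoc (((ξ:ℂ)-I) ^ ((1:ℂ)/2)) (1/((ξ:ℂ)-I) ^ ((1:ℂ)/2)),
      mul_one_div (((ξ:ℂ)-I) ^ ((1:ℂ)/2)) (((ξ:ℂ)-I) ^ ((1:ℂ)/2)), div_self hpow_ne, one_mul]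
  have hC : (∑' n : ℤ, cexp (-(Real.pi:ℂ) * ((ξ:ℂ)-I) * (n:ℂ)^2 + 2*(Real.pi:ℂ) * (-I * bb k a ξ) * (n:ℂ)))
      = ∑' n : ℤ, cexp (-(Real.pi:ℂ) * (ξ:ℂ) * (n:ℂ)^2 + 2*(Real.pi:ℂ) * (I * (1/2 - bb k a ξ)) * (n:ℂ)) := by
    refine tsum_congr fun n => ?_
    obtain ⟨m, hm⟩ := Int.even_mul_succ_self (n - 1)
    rw [sub_add_cancel] at hm
    have hm' : ((n:ℂ) - 1) * (n:ℂ) = (m:ℂ) + (m:ℂ) := by exact_mod_cast congrArg (Int.cast : ℤ → ℂ) hm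
    have he : -(Real.pi:ℂ) * ((ξ:ℂ)-I) * (n:ℂ)^2 + 2*(Real.pi:ℂ) * (-I * bb k a ξ) * (n:ℂ)
        = (-(Real.pi:ℂ) * (ξ:ℂ) * (n:ℂ)^2 + 2*(Real.pi:ℂ) * (I * (1/2 - bb k a ξ)) * (n:ℂ))
          + (m:ℂ) * (2 * (Real.pi:ℂ) * I) := by
      linear_combination (Real.pi:ℂ) * I * hm'
    rw [he, Complex.exp_add, Complex.exp_int_mul_two_pi_mul_I, mul_one]
  have hD := Complex.tsum_exp_neg_quadratic (a := (ξ:ℂ)) (by simp [hξ]) (I * (1/2 - bb k a ξ))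
  have hDu : (∑' n : ℤ, cexp (-(Real.pi:ℂ)/(ξ:ℂ) * ((n:ℂ) + I * (I * (1/2 - bb k a ξ)))^2))
      = ∑' m : ℤ, cexp (-(Real.pi:ℂ)/ξ * ((m:ℂ) + uu k a ξ)^2) := by
    refine tsum_congr fun n => ?_
    congr 1
    rw [← mul_assoc, Complex.I_mul_I, bb, uu]
    ring_nf
  rw [step1, hR, hC, hD, hDu]
  ring

lemma norm_term (k : ℤ) (a ξ : ℝ) (hξ : 0 < ξ) (m : ℤ) :
    ‖cexp (-(Real.pi:ℂ)/ξ * ((m:ℂ) + uu k a ξ)^2)‖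
      = Real.exp (-(Real.pi/ξ) * ((m:ℝ) + rr k a)^2 + 9*Real.pi/4*ξ) := by
  rw [Complex.norm_exp]
  congr 1
  have hξ' : (ξ:ℂ) ≠ 0 := Complex.ofReal_ne_zero.mpr hξ.ne'
  have hx : ((m:ℂ) + uu k a ξ) = (((m:ℝ) + rr k a : ℝ):ℂ) + ((-(3/2)*ξ : ℝ):ℂ)*I := by
    rw [uu, rr]; push_cast; ring
  have h3 : -(Real.pi:ℂ)/↑ξ * ((m:ℂ) + uu k a ξ)^2
      = ((-(Real.pi/ξ) * (((m:ℝ) + rr k a)^2 - (-(3/2)*ξ)^2) : ℝ):ℂ)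
        + ((-(Real.pi/ξ) * (2*((m:ℝ) + rr k a)*(-(3/2)*ξ)) : ℝ):ℂ)*I := by
    rw [hx]
    push_cast
    field_simp
    ring_nf
    simp only [Complex.I_sq]
    ring
  rw [h3]
  simp only [Complex.add_re, Complex.ofReal_re, Complex.mul_re, Complex.ofReal_im,
    Complex.I_re, Complex.I_im, mul_zero, mul_one, zero_mul, sub_zero, zero_sub, neg_zero, add_zero]
  field_simp
  ring

lemma summable_term (ξ : ℝ) (hξ : 0 < ξ) (u : ℂ) :
    Summable (fun m:ℤ => cexp (-(Real.pi:ℂ)/ξ * ((m:ℂ) + u)^2)) := by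
  have hξ' : (ξ:ℂ) ≠ 0 := Complex.ofReal_ne_zero.mpr hξ.ne'
  have h : ∀ m:ℤ, cexp (-(Real.pi:ℂ)/ξ * (u:ℂ)^2) * jacobiTheta₂_term m (I*u/ξ) (I/ξ)
      = cexp (-(Real.pi:ℂ)/ξ * ((m:ℂ) + u)^2) := by
    intro m
    rw [jacobiTheta₂_term, ← Complex.exp_add]
    congr 1
    field_simp
    ring_nf
    simp only [Complex.I_sq]
    ring
  have him : 0 < (I/(ξ:ℂ)).im := by
    have h2 : I/(ξ:ℂ) = ((1/ξ:ℝ):ℂ)*I := by push_cast; field_simp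
    rw [h2]
    have : (((1/ξ:ℝ):ℂ)*I).im = 1/ξ := by simp
    rw [this]
    positivity
  exact (((summable_jacobiTheta₂_term_iff (I*u/ξ) (I/ξ)).mpr him).mul_left _).congr h

lemma summable_norm_term (k : ℤ) (a ξ : ℝ) (hξ : 0 < ξ) :
    Summable (fun m:ℤ => ‖cexp (-(Real.pi:ℂ)/ξ * ((m:ℂ) + uu k a ξ)^2)‖) := by
  have h := summable_norm_iff.mpr (summable_term ξ hξ (uu k a ξ))
  exact h.congr fun m => rfl

lemma int_geom (q : ℝ) (h0 : 0 ≤ q) (h1 : q < 1) :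
    Summable (fun j:ℤ => q^j.natAbs)
      ∧ (∑' j:ℤ, (if j = 0 then (0:ℝ) else q^j.natAbs)) = 2*q/(1-q) := by
  have hs1 : Summable (fun n:ℕ => q^n) := summable_geometric_of_lt_one h0 h1
  have f1 : Summable (fun n:ℕ => q^((n:ℤ)).natAbs) := by simpa using hs1
  have hneg : ∀ n:ℕ, q^((-((n:ℤ)+1))).natAbs = q * q^n := by
    intro n
    have h : ((-((n:ℤ)+1))).natAbs = n + 1 := by omega
    rw [h, pow_succ]; ring
  have f2 : Summable (fun n:ℕ => q^((-((n:ℤ)+1))).natAbs) :=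
    (hs1.mul_left q).congr fun n => (hneg n).symm
  have hsum : Summable (fun j:ℤ => q^j.natAbs) := Summable.of_nat_of_neg_add_one f1 f2
  refine ⟨hsum, ?_⟩
  have htot : (∑' j:ℤ, q^j.natAbs) = (1-q)⁻¹ + q * (1-q)⁻¹ := by
    rw [tsum_of_nat_of_neg_add_one (f := fun j:ℤ => q^j.natAbs) f1 f2]
    congr 1
    · rw [← tsum_geometric_of_lt_one h0 h1]
      exact tsum_congr fun n => by simp
    · rw [tsum_congr hneg, tsum_mul_left, tsum_geometric_of_lt_one h0 h1]
  have hsplit := Summable.tsum_eq_add_tsum_ite hsum (0:ℤ)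
  have h0q : (1:ℝ) - q ≠ 0 := by linarith
  have he : (∑' j:ℤ, (if j = 0 then (0:ℝ) else q^j.natAbs)) = (∑' j:ℤ, q^j.natAbs) - 1 := by
    rw [hsplit]
    norm_num
  rw [he, htot]
  field_simp
  ring

lemma T_est (k : ℤ) (a ξ δ : ℝ) (hξ : 0 < ξ) (hδ0 : 0 < δ) (hδ1 : δ < 1/6)
    (hf : Int.fract (a - ((k:ℝ)+1)/3) ∈ Set.Icc δ (1-δ))
    (hq : Real.exp (-(2*Real.pi*δ)/ξ) ≤ 1/5) :
    Real.exp (-(Real.pi/ξ)*(1/2 - Int.fract (a - ((k:ℝ)+1)/3))^2 + 9*Real.pi/4*ξ) / 2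
      ≤ ‖∑' m:ℤ, cexp (-(Real.pi:ℂ)/ξ * ((m:ℂ) + uu k a ξ)^2)‖
    ∧ ‖∑' m:ℤ, cexp (-(Real.pi:ℂ)/ξ * ((m:ℂ) + uu k a ξ)^2)‖
      ≤ 2 * Real.exp (-(Real.pi/ξ)*(1/2 - Int.fract (a - ((k:ℝ)+1)/3))^2 + 9*Real.pi/4*ξ) := by
  have hπ := Real.pi_pos
  set t : ℝ := a - ((k:ℝ)+1)/3 with ht
  set s : ℝ := 1/2 - Int.fract t with hs
  set q : ℝ := Real.exp (-(2*Real.pi*δ)/ξ) with hqdef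
  set G : ℝ := Real.exp (-(Real.pi/ξ)*s^2 + 9*Real.pi/4*ξ) with hG
  set f : ℤ → ℂ := fun m => cexp (-(Real.pi:ℂ)/ξ * ((m:ℂ) + uu k a ξ)^2) with hfdef
  set m₀ : ℤ := ⌊t⌋ + 3 with hm₀
  have hd1 : (m₀:ℝ) + rr k a = s := by
    rw [hm₀, rr, hs, Int.fract, ht]; push_cast; ring
  have hs_abs : |s| ≤ 1/2 - δ := by
    rw [abs_le]; constructor
    · have := hf.2; rw [hs]; linarith
    · have := hf.1; rw [hs]; linarith
  have hq0 : (0:ℝ) < q := Real.exp_pos _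
  have hq1 : q < 1 := lt_of_le_of_lt hq (by norm_num)
  have hG0 : (0:ℝ) < G := Real.exp_pos _
  have habs : ∀ m:ℤ, ‖f m‖
      = Real.exp (-(Real.pi/ξ)*((m:ℝ) + rr k a)^2 + 9*Real.pi/4*ξ) := fun m => norm_term k a ξ hξ m
  have habs0 : ‖f m₀‖ = G := by rw [habs, hd1]
  have hcomp : ∀ m:ℤ, m ≠ m₀ → ‖f m‖ ≤ G * q^((m - m₀).natAbs) := by
    intro m hm
    rw [habs]
    have hJ1 : (1:ℝ) ≤ |((m - m₀ : ℤ):ℝ)| := by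
      have h1 : (1:ℤ) ≤ |m - m₀| := Int.one_le_abs (sub_ne_zero.mpr hm)
      have : ((1:ℤ):ℝ) ≤ ((|m - m₀|:ℤ):ℝ) := by exact_mod_cast h1
      rwa [Int.cast_abs, Int.cast_one] at this
    have hmr : ((m:ℝ) + rr k a) = s + ((m - m₀:ℤ):ℝ) := by push_cast; linarith [hd1]
    have key : s^2 + 2*δ*|((m-m₀:ℤ):ℝ)| ≤ ((m:ℝ) + rr k a)^2 := by
      rw [hmr]
      set J : ℝ := ((m-m₀:ℤ):ℝ) with hJ
      have h1 : |s * J| = |s| * |J| := abs_mul s J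
      have h2 : -(|s| * |J|) ≤ s * J := by rw [← h1]; exact neg_abs_le _
      nlinarith [abs_nonneg s, abs_nonneg J, _root_.sq_abs s, _root_.sq_abs J]
    have hnat : (((m - m₀).natAbs : ℕ) : ℝ) = |((m-m₀:ℤ):ℝ)| := by
      rw [Nat.cast_natAbs, Int.cast_abs]
    have hqpow : G * q^((m-m₀).natAbs)
        = Real.exp (-(Real.pi/ξ)*(s^2 + 2*δ*|((m-m₀:ℤ):ℝ)|) + 9*Real.pi/4*ξ) := by
      rw [hG, hqdef, ← Real.exp_nat_mul, ← Real.exp_add]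
      congr 1
      rw [hnat]
      field_simp
      ring
    rw [hqpow]
    apply Real.exp_le_exp.mpr
    have hc : -(Real.pi/ξ) ≤ 0 := neg_nonpos.mpr (by positivity)
    nlinarith [mul_le_mul_of_nonpos_left key hc]
  -- sum splitting
  have hsum : Summable f := summable_term ξ hξ (uu k a ξ)
  have hnsum : Summable (fun m:ℤ => ‖f m‖) := summable_norm_term k a ξ hξ
  have hsplit := Summable.tsum_eq_add_tsum_ite hsum m₀
  have hnsum_ite : Summable (fun m:ℤ => ‖if m = m₀ then 0 else f m‖) := by
    apply Summable.of_nonneg_of_le (fun m => norm_nonneg _) (fun m => ?_) hnsum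
    by_cases h : m = m₀ <;> simp [h]
  have hHsum : Summable (fun m:ℤ => G * q^((m - m₀).natAbs)) := by
    have h1 := (int_geom q hq0.le hq1).1.mul_left G
    have h2 : Summable ((fun j:ℤ => G * q^j.natAbs) ∘ (fun m : ℤ => m - m₀)) := by
      exact (Equiv.summable_iff (Equiv.subRight m₀) (f := fun j:ℤ => G * q^j.natAbs)).mpr h1
    exact h2
  have hHsum_ite : Summable (fun m:ℤ => if m = m₀ then (0:ℝ) else G * q^((m - m₀).natAbs)) := by
    apply Summable.of_nonneg_of_le (fun m => ?_) (fun m => ?_) hHsum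
    · by_cases h : m = m₀ <;> simp [h] <;> positivity
    · by_cases h : m = m₀ <;> simp [h] <;> positivity
  have hR : ‖∑' m:ℤ, (if m = m₀ then 0 else f m)‖ ≤ G/2 := by
    have step1 : ‖∑' m:ℤ, (if m = m₀ then 0 else f m)‖
        ≤ ∑' m:ℤ, ‖if m = m₀ then 0 else f m‖ := norm_tsum_le_tsum_norm hnsum_ite
    have step2 : (∑' m:ℤ, ‖if m = m₀ then 0 else f m‖)
        ≤ ∑' m:ℤ, (if m = m₀ then (0:ℝ) else G * q^((m - m₀).natAbs)) := by
      apply Summable.tsum_le_tsum (fun m => ?_) hnsum_ite hHsum_ite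
      by_cases h : m = m₀
      · simp [h]
      · simp only [h, if_false]; exact hcomp m h
    have step3 : (∑' m:ℤ, (if m = m₀ then (0:ℝ) else G * q^((m - m₀).natAbs)))
        = G * (2*q/(1-q)) := by
      rw [← Equiv.tsum_eq (Equiv.addRight m₀)
        (fun m => if m = m₀ then (0:ℝ) else G * q^((m - m₀).natAbs))]
      have hcong : ∀ j:ℤ, (if j + m₀ = m₀ then (0:ℝ) else G * q^((j + m₀ - m₀).natAbs))
          = G * (if j = 0 then (0:ℝ) else q^(j.natAbs)) := by
        intro j
        by_cases h : j = 0
        · simp [h]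
        · have h2 : j + m₀ ≠ m₀ := by
            intro hcon
            exact h (by linarith [add_eq_right.mp hcon])
          simp only [h, h2, if_false, add_sub_cancel_right, mul_ite, mul_zero]
      calc (∑' j:ℤ, (fun m => if m = m₀ then (0:ℝ) else G * q^((m - m₀).natAbs)) ((Equiv.addRight m₀) j))
          = ∑' j:ℤ, G * (if j = 0 then (0:ℝ) else q^(j.natAbs)) := by
            apply tsum_congr; intro j
            simpa using hcong j
        _ = G * ∑' j:ℤ, (if j = 0 then (0:ℝ) else q^(j.natAbs)) := tsum_mul_left
        _ = G * (2*q/(1-q)) := by rw [(int_geom q hq0.le hq1).2]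
    have hfrac : 2*q/(1-q) ≤ 1/2 := by
      rw [div_le_iff₀ (by linarith : (0:ℝ) < 1-q)]
      nlinarith
    calc ‖∑' m:ℤ, (if m = m₀ then 0 else f m)‖
        ≤ G * (2*q/(1-q)) := by rw [← step3]; exact step1.trans step2
      _ ≤ G/2 := by nlinarith
  have htri1 : ‖∑' m, f m‖ ≤ ‖f m₀‖ + ‖∑' m:ℤ, (if m = m₀ then 0 else f m)‖ := by
    rw [hsplit]; exact norm_add_le _ _
  have htri2 : ‖f m₀‖ - ‖∑' m:ℤ, (if m = m₀ then 0 else f m)‖ ≤ ‖∑' m, f m‖ := by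
    rw [hsplit]
    have h := norm_add_le (f m₀ + (∑' m:ℤ, (if m = m₀ then 0 else f m)))
      (-(∑' m:ℤ, (if m = m₀ then 0 else f m)))
    rw [add_neg_cancel_right, norm_neg] at h
    linarith
  constructor
  · rw [habs0] at htri2; linarith
  · rw [habs0] at htri1; linarith

lemma Pre_re (a ξ : ℝ) : (Pre a ξ).re = Real.pi*a^2*ξ/(ξ^2+1) - 9*Real.pi/4*ξ := by
  have hd : (ξ:ℝ)^2 + 1 ≠ 0 := by positivity
  have h : Pre a ξ = ((Real.pi*a^2*ξ/(ξ^2+1) - 9*Real.pi/4*ξ : ℝ):ℂ)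
      + ((Real.pi*a^2/(ξ^2+1) + 3*Real.pi*a + 9*Real.pi/4 : ℝ):ℂ)*I := by
    rw [Pre]
    have hdc := den_ne ξ
    push_cast
    field_simp
    ring_nf
    simp only [Complex.I_sq]
    ring
  rw [h]
  simp only [Complex.add_re, Complex.ofReal_re, Complex.mul_re, Complex.ofReal_im,
    Complex.I_re, Complex.I_im, mul_zero, mul_one, zero_mul, sub_zero, zero_sub, neg_zero, add_zero]

lemma abs_fact1 (ξ : ℝ) : ‖((ξ:ℂ) - I) ^ ((1:ℂ)/2)‖ = Real.sqrt (ξ^2+1) ^ ((1:ℝ)/2) := by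
  rw [Complex.norm_cpow_of_ne_zero (xi_sub_I_ne ξ)]
  have h1 : ((1:ℂ)/2).re = (1:ℝ)/2 := by norm_num
  have h2 : ((1:ℂ)/2).im = 0 := by norm_num
  rw [h1, h2, mul_zero, Real.exp_zero, div_one]
  congr 1
  rw [Complex.norm_def, Complex.normSq_apply]
  simp
  ring_nf

lemma abs_fact2 (ξ : ℝ) (hξ : 0 < ξ) : ‖1/(ξ:ℂ) ^ ((1:ℂ)/2)‖ = 1/ξ ^ ((1:ℝ)/2) := by
  rw [norm_div, norm_one, Complex.norm_cpow_eq_rpow_re_of_pos hξ]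
  norm_num

lemma log_est (k : ℤ) (a ξ δ : ℝ) (hξ0 : 0 < ξ) (hξ1 : ξ ≤ 1) (hδ0 : 0 < δ) (hδ1 : δ < 1/6)
    (ha0 : 0 ≤ a) (ha1 : a ≤ 1)
    (hf : Int.fract (a - ((k:ℝ)+1)/3) ∈ Set.Icc δ (1-δ))
    (hq : Real.exp (-(2*Real.pi*δ)/ξ) ≤ 1/5) :
    |Real.log ‖theta k (-(a:ℂ)*tau3 ξ) (tau3 ξ)‖
      + (Real.pi/ξ)*(1/2 - Int.fract (a - ((k:ℝ)+1)/3))^2| ≤ 25 + |Real.log ξ|/2 := by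
  have hπ := Real.pi_pos
  have hπ4 : Real.pi < 3.15 := by
    have := Real.pi_lt_d2
    linarith
  set s : ℝ := 1/2 - Int.fract (a - ((k:ℝ)+1)/3) with hs
  set S : ℂ := ∑' m:ℤ, cexp (-(Real.pi:ℂ)/ξ * ((m:ℂ) + uu k a ξ)^2) with hS
  set G : ℝ := Real.exp (-(Real.pi/ξ)*s^2 + 9*Real.pi/4*ξ) with hG
  obtain ⟨hT1, hT2⟩ := T_est k a ξ δ hξ0 hδ0 hδ1 hf hq
  have hG0 : (0:ℝ) < G := Real.exp_pos _
  have hS0 : (0:ℝ) < ‖S‖ := lt_of_lt_of_le (by positivity) hT1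
  -- factorization of the norm
  have hsq0 : (0:ℝ) < Real.sqrt (ξ^2+1) := Real.sqrt_pos.mpr (by positivity)
  have hθ : ‖theta k (-(a:ℂ)*tau3 ξ) (tau3 ξ)‖
      = Real.exp ((Pre a ξ).re) * (Real.sqrt (ξ^2+1) ^ ((1:ℝ)/2)) * (1/ξ ^ ((1:ℝ)/2)) * ‖S‖ := by
    rw [master k a ξ hξ0]
    rw [norm_mul, norm_mul, norm_mul, abs_fact1, abs_fact2 ξ hξ0]
    rw [Complex.norm_exp]
    ring
  have hlog : Real.log ‖theta k (-(a:ℂ)*tau3 ξ) (tau3 ξ)‖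
      = (Pre a ξ).re + Real.log (Real.sqrt (ξ^2+1) ^ ((1:ℝ)/2))
        + Real.log (1/ξ ^ ((1:ℝ)/2)) + Real.log ‖S‖ := by
    rw [hθ, Real.log_mul (by positivity) hS0.ne', Real.log_mul (by positivity) (by positivity),
      Real.log_mul (by positivity) (by positivity), Real.log_exp]
  -- bounds
  have b1 : |(Pre a ξ).re| ≤ 11 := by
    rw [Pre_re, abs_le]
    have h1 : 0 ≤ Real.pi*a^2*ξ/(ξ^2+1) := by positivity
    have h2 : Real.pi*a^2*ξ/(ξ^2+1) ≤ Real.pi := by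
      rw [div_le_iff₀ (by positivity)]
      have h2a : a^2*ξ ≤ 1 := by nlinarith
      nlinarith [mul_le_mul_of_nonneg_left h2a hπ.le, sq_nonneg ξ]
    have h3 : 0 ≤ 9*Real.pi/4*ξ := by positivity
    have h4 : 9*Real.pi/4*ξ ≤ 9*Real.pi/4 := by nlinarith
    constructor <;> nlinarith
  have b2a : Real.log (Real.sqrt (ξ^2+1) ^ ((1:ℝ)/2)) = Real.log (ξ^2+1)/4 := by
    rw [Real.log_rpow hsq0, Real.log_sqrt (by positivity)]
    ring
  have b2 : |Real.log (Real.sqrt (ξ^2+1) ^ ((1:ℝ)/2))| ≤ 1 := by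
    rw [b2a, abs_le]
    have h1 : 0 ≤ Real.log (ξ^2+1) := Real.log_nonneg (by nlinarith)
    have h2 : Real.log (ξ^2+1) ≤ ξ^2 := by
      have := Real.log_le_sub_one_of_pos (show (0:ℝ) < ξ^2+1 by positivity)
      linarith
    constructor <;> nlinarith
  have b3 : Real.log (1/ξ ^ ((1:ℝ)/2)) = -(Real.log ξ)/2 := by
    rw [one_div, Real.log_inv, Real.log_rpow hξ0]
    ring
  have b4 : |Real.log ‖S‖ + (Real.pi/ξ)*s^2| ≤ 9 := by
    have hl1 : Real.log (G/2) ≤ Real.log ‖S‖ := Real.log_le_log (by positivity) hT1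
    have hl2 : Real.log ‖S‖ ≤ Real.log (2*G) := Real.log_le_log hS0 hT2
    have he1 : Real.log (G/2) = (-(Real.pi/ξ)*s^2 + 9*Real.pi/4*ξ) - Real.log 2 := by
      rw [Real.log_div hG0.ne' (by norm_num), hG, Real.log_exp]
    have he2 : Real.log (2*G) = (-(Real.pi/ξ)*s^2 + 9*Real.pi/4*ξ) + Real.log 2 := by
      rw [Real.log_mul (by norm_num) hG0.ne', hG, Real.log_exp]
      ring
    have hlog2 : Real.log 2 ≤ 1 := by
      have := Real.log_le_sub_one_of_pos (show (0:ℝ) < 2 by norm_num)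
      linarith
    have hlog2' : 0 ≤ Real.log 2 := Real.log_nonneg (by norm_num)
    have hx1 : 0 ≤ 9*Real.pi/4*ξ := by positivity
    have hx2 : 9*Real.pi/4*ξ ≤ 9*Real.pi/4 := by nlinarith
    rw [abs_le]
    constructor <;> nlinarith
  -- assemble
  rw [hlog, b3]
  have h5 : -(|Real.log ξ|/2) ≤ -(Real.log ξ)/2 ∧ -(Real.log ξ)/2 ≤ |Real.log ξ|/2 := by
    constructor
    · have := le_abs_self (Real.log ξ); linarith
    · have := neg_abs_le (Real.log ξ); linarith
  have hb1 := abs_le.mp b1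
  have hb2 := abs_le.mp b2
  have hb4 := abs_le.mp b4
  rw [abs_le]
  constructor <;> [nlinarith [h5.1, hb1.1, hb2.1, hb4.1]; nlinarith [h5.2, hb1.2, hb2.2, hb4.2]]

lemma fract_helper (t : ℝ) (j : ℤ) (δ : ℝ) (hδ0 : 0 < δ) (hδ1 : δ < 1/6)
    (h1 : δ ≤ t - j) (h2 : t - j ≤ 1 - δ) : Int.fract t ∈ Set.Icc δ (1-δ) := by
  have he : Int.fract t = t - j := by
    rw [← Int.fract_sub_intCast t j]
    exact Int.fract_eq_self.mpr ⟨by linarith, by linarith⟩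
  rw [he]; exact ⟨h1, h2⟩

lemma fract_mem (k : ℤ) (hk : k = 0 ∨ k = 1 ∨ k = 2) (δ a : ℝ) (hδ0 : 0 < δ) (hδ1 : δ < 1/6)
    (ha : a ∈ Rdelta δ) : Int.fract (a - ((k:ℝ)+1)/3) ∈ Set.Icc δ (1-δ) := by
  rcases ha with (h | h) | h <;> obtain ⟨h1, h2⟩ := h <;>
    rcases hk with hk | hk | hk <;> subst hk <;>
    [ exact fract_helper _ (-1) δ hδ0 hδ1 (by push_cast; linarith) (by push_cast; linarith);
      exact fract_helper _ (-1) δ hδ0 hδ1 (by push_cast; linarith) (by push_cast; linarith);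
      exact fract_helper _ (-1) δ hδ0 hδ1 (by push_cast; linarith) (by push_cast; linarith);
      exact fract_helper _ 0 δ hδ0 hδ1 (by push_cast; linarith) (by push_cast; linarith);
      exact fract_helper _ (-1) δ hδ0 hδ1 (by push_cast; linarith) (by push_cast; linarith);
      exact fract_helper _ (-1) δ hδ0 hδ1 (by push_cast; linarith) (by push_cast; linarith);
      exact fract_helper _ 0 δ hδ0 hδ1 (by push_cast; linarith) (by push_cast; linarith);
      exact fract_helper _ 0 δ hδ0 hδ1 (by push_cast; linarith) (by push_cast; linarith);
      exact fract_helper _ (-1) δ hδ0 hδ1 (by push_cast; linarith) (by push_cast; linarith)]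

lemma Rdelta_bounds (δ a : ℝ) (hδ0 : 0 < δ) (hδ1 : δ < 1/6) (ha : a ∈ Rdelta δ) :
    0 ≤ a ∧ a ≤ 1 := by
  rcases ha with (h | h) | h <;> obtain ⟨h1, h2⟩ := h <;> constructor <;> linarith

lemma tauE_eq (K ε : ℝ) (hK : 0 < K) : tauE K ε = tau3 (2*Real.pi*ε/(9*K)) := by
  have h1 : (9*(K:ℂ) + 2*Real.pi*I*ε) ≠ 0 := by
    intro h
    have := congrArg Complex.re h
    simp at this
    nlinarith [Real.pi_pos]
  have h2 : (3:ℂ)*(1 + I*((2*Real.pi*ε/(9*K) : ℝ):ℂ)) ≠ 0 :=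
    mul_ne_zero (by norm_num) (one_add_ne _)
  rw [tauE, tau3, div_eq_div_iff h1 h2]
  have hK' : (K:ℂ) ≠ 0 := Complex.ofReal_ne_zero.mpr hK.ne'
  push_cast
  field_simp
  ring

lemma bound_tendsto (K : ℝ) (hK : 0 < K) :
    Filter.Tendsto (fun ε:ℝ => ε*25 + ε*|Real.log (2*Real.pi*ε/(9*K))|/2)
      (nhdsWithin 0 (Set.Ioi (0:ℝ))) (nhds 0) := by
  have hc : (0:ℝ) < 2*Real.pi/(9*K) := by positivity
  have h1 : Filter.Tendsto (fun x:ℝ => Real.log x * x) (nhdsWithin 0 (Set.Ioi (0:ℝ))) (nhds 0) := by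
    simpa using tendsto_log_mul_rpow_nhdsGT_zero one_pos
  have h2 : Filter.Tendsto (fun x:ℝ => |Real.log x * x|) (nhdsWithin 0 (Set.Ioi (0:ℝ))) (nhds 0) := by
    simpa using h1.abs
  have h3 : Filter.Tendsto (fun ε:ℝ => ε*(25 + |Real.log (2*Real.pi/(9*K))|/2))
      (nhdsWithin 0 (Set.Ioi (0:ℝ))) (nhds 0) := by
    have hcont : Continuous (fun ε:ℝ => ε*(25 + |Real.log (2*Real.pi/(9*K))|/2)) :=
      continuous_id.mul continuous_const
    have := (hcont.tendsto (0:ℝ)).mono_left (nhdsWithin_le_nhds (s := Set.Ioi (0:ℝ)))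
    simpa using this
  have hg : Filter.Tendsto (fun ε:ℝ => ε*(25 + |Real.log (2*Real.pi/(9*K))|/2) + |Real.log ε * ε|/2)
      (nhdsWithin 0 (Set.Ioi (0:ℝ))) (nhds 0) := by
    have := h3.add (h2.div_const 2)
    simpa using this
  apply squeeze_zero' ?_ ?_ hg
  · filter_upwards [self_mem_nhdsWithin] with ε (hε : ε ∈ Set.Ioi (0:ℝ))
    have hε0 : 0 < ε := hε
    positivity
  · filter_upwards [self_mem_nhdsWithin] with ε (hε : ε ∈ Set.Ioi (0:ℝ))
    have hε0 : 0 < ε := hε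
    have hsplit : Real.log (2*Real.pi*ε/(9*K)) = Real.log (2*Real.pi/(9*K)) + Real.log ε := by
      rw [show 2*Real.pi*ε/(9*K) = (2*Real.pi/(9*K))*ε by ring, Real.log_mul hc.ne' hε0.ne']
    rw [hsplit]
    have htri : |Real.log (2*Real.pi/(9*K)) + Real.log ε|
        ≤ |Real.log (2*Real.pi/(9*K))| + |Real.log ε| := abs_add_le _ _
    have habs : |Real.log ε * ε| = |Real.log ε| * ε := by
      rw [abs_mul, abs_of_pos hε0]
    nlinarith [abs_nonneg (Real.log ε), abs_nonneg (Real.log (2*Real.pi/(9*K))),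
      mul_le_mul_of_nonneg_left htri hε0.le]

/-- Ultradiscretization of the level-three theta functions: uniform convergence on `R_δ`
of `ε log|θ_k(−aτ_ε, τ_ε)|` to `−(9K/2)(frac((3Ka−(k+1)K)/(3K)) − 1/2)²` as `ε → 0⁺`. -/
theorem ultradiscrete_limit_of_theta (K δ : ℝ) (hK : 0 < K) (hδ : δ ∈ Set.Ioo 0 (1 / 6))
    (k : ℤ) (hk : k = 0 ∨ k = 1 ∨ k = 2) :
    TendstoUniformlyOn
      (fun (ε : ℝ) (a : ℝ) =>
        ε * Real.log ‖theta k (-(a : ℂ) * tauE K ε) (tauE K ε)‖)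
      (fun (a : ℝ) =>
        -(9 * K / 2) * (Int.fract ((3 * K * a - ((k : ℝ) + 1) * K) / (3 * K)) - 1 / 2) ^ 2)
      (nhdsWithin 0 (Set.Ioi (0 : ℝ))) (Rdelta δ) := by
  obtain ⟨hδ0, hδ1⟩ := hδ
  have hπ := Real.pi_pos
  rw [Metric.tendstoUniformlyOn_iff]
  intro η hη
  set b : ℝ := min (9*K/(2*Real.pi)) (9*K*δ/2) with hb
  have hb0 : 0 < b := by
    apply lt_min <;> positivity
  have hev1 : ∀ᶠ ε in nhdsWithin 0 (Set.Ioi (0:ℝ)), ε ∈ Set.Ioo 0 b :=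
    Filter.eventually_of_mem (Ioo_mem_nhdsGT_of_mem ⟨le_refl 0, hb0⟩) (fun x hx => hx)
  have hev2 : ∀ᶠ ε in nhdsWithin 0 (Set.Ioi (0:ℝ)),
      ε*25 + ε*|Real.log (2*Real.pi*ε/(9*K))|/2 < η :=
    (bound_tendsto K hK).eventually_lt_const hη
  filter_upwards [hev1, hev2] with ε hε1 hε2
  intro a ha
  have hε0 : 0 < ε := hε1.1
  set ξ : ℝ := 2*Real.pi*ε/(9*K) with hξdef
  have hξ0 : 0 < ξ := by positivity
  have hεb := hε1.2
  have hξ1 : ξ ≤ 1 := by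
    rw [hξdef, div_le_one (by positivity)]
    have h := le_trans hεb.le (min_le_left _ _)
    calc 2*Real.pi*ε ≤ 2*Real.pi*(9*K/(2*Real.pi)) := by nlinarith
      _ = 9*K := by field_simp
  have hξπδ : ξ ≤ Real.pi*δ := by
    rw [hξdef, div_le_iff₀ (by positivity)]
    have h := le_trans hεb.le (min_le_right _ _)
    nlinarith
  have hq : Real.exp (-(2*Real.pi*δ)/ξ) ≤ 1/5 := by
    have he2 : -(2*Real.pi*δ)/ξ ≤ -2 := by
      rw [div_le_iff₀ hξ0]
      nlinarith
    have hmono := Real.exp_le_exp.mpr he2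
    have he5 : Real.exp (-2 : ℝ) ≤ 1/5 := by
      have he := Real.exp_one_gt_d9
      have h22 : Real.exp 2 = Real.exp 1 * Real.exp 1 := by
        rw [← Real.exp_add]; norm_num
      have h5 : (5:ℝ) ≤ Real.exp 2 := by nlinarith
      have h6 := inv_anti₀ (by norm_num : (0:ℝ) < 5) h5
      rw [Real.exp_neg]
      simpa [one_div] using h6
    calc Real.exp (-(2*Real.pi*δ)/ξ) ≤ Real.exp (-2:ℝ) := hmono
      _ ≤ 1/5 := he5
  have hfr := fract_mem k hk δ a hδ0 hδ1 ha
  obtain ⟨ha0, ha1⟩ := Rdelta_bounds δ a hδ0 hδ1 ha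
  have hle := log_est k a ξ δ hξ0 hξ1 hδ0 hδ1 ha0 ha1 hfr hq
  have htau : tauE K ε = tau3 ξ := tauE_eq K ε hK
  rw [Real.dist_eq]
  have harg : (3*K*a - ((k:ℝ)+1)*K)/(3*K) = a - ((k:ℝ)+1)/3 := by
    field_simp
  have hKs : ε * (Real.pi/ξ) = 9*K/2 := by
    rw [hξdef]
    field_simp
  have key : -(9*K/2) * (Int.fract ((3*K*a - ((k:ℝ)+1)*K)/(3*K)) - 1/2)^2
      - ε * Real.log ‖theta k (-(a:ℂ) * tauE K ε) (tauE K ε)‖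
    = -(ε * (Real.log ‖theta k (-(a:ℂ)*tau3 ξ) (tau3 ξ)‖
        + (Real.pi/ξ)*(1/2 - Int.fract (a - ((k:ℝ)+1)/3))^2)) := by
    rw [htau, harg, ← hKs]
    ring
  rw [key, abs_neg, abs_mul, abs_of_pos hε0]
  calc ε * |Real.log ‖theta k (-(a:ℂ)*tau3 ξ) (tau3 ξ)‖
        + (Real.pi/ξ)*(1/2 - Int.fract (a - ((k:ℝ)+1)/3))^2|
      ≤ ε * (25 + |Real.log ξ|/2) := mul_le_mul_of_nonneg_left hle hε0.le
    _ = ε*25 + ε*|Real.log ξ|/2 := by ring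
    _ < η := hε2
end
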